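/- If f is a nonnegative integrable function on ℝ^D with density ρ > 0, bulk velocity u, and temperature T > 0, then among all nonnegative integrable functions g with the same moments (ρ, u, T), the Maxwellian M^{ρ,u,T} uniquely minimizes the Boltzmann entropy H(g) = ∫ g log g dv. -/

import Mathlib

open MeasureTheory Real

section Aux

open Set Filter Asymptotics

lemma integrableOn_pow_mul_gauss {b : ℝ} (hb : 0 < b) (n : ℕ) :
    IntegrableOn (fun y : ℝ => y ^ n * Real.exp (-b * y ^ 2)) (Ioi 0) := by
  refine (integrableOn_rpow_mul_exp_neg_mul_sq hb (s := (n : ℝ))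
    (lt_of_lt_of_le neg_one_lt_zero (Nat.cast_nonneg n))).congr_fun
    (fun x _ => by simp only [Real.rpow_natCast]) measurableSet_Ioi

lemma tendsto_pow_mul_gauss {b : ℝ} (hb : 0 < b) (n : ℕ) :
    Tendsto (fun y : ℝ => y ^ n * Real.exp (-b * y ^ 2)) atTop (nhds 0) := by
  have hg : Tendsto (fun x : ℝ => Real.exp (-(1 / 2) * x)) atTop (nhds 0) := by
    have h1 : Tendsto (fun x : ℝ => (1/2 : ℝ) * x) atTop atTop :=
      tendsto_id.const_mul_atTop (by norm_num)
    refine (Real.tendsto_exp_neg_atTop_nhds_zero.comp h1).congr fun x => ?_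
    simp [Function.comp, neg_mul]
  have h := (rpow_mul_exp_neg_mul_sq_isLittleO_exp_neg hb (n : ℝ)).tendsto_zero_of_tendsto hg
  refine h.congr' ?_
  filter_upwards [eventually_gt_atTop (0:ℝ)] with x hx
  rw [Real.rpow_natCast]

lemma gauss_parts {b : ℝ} (hb : 0 < b) (n : ℕ) :
    ∫ y in Ioi (0:ℝ), y ^ (n + 2) * Real.exp (-b * y ^ 2)
      = (((n : ℝ) + 1) / (2 * b)) * ∫ y in Ioi (0:ℝ), y ^ n * Real.exp (-b * y ^ 2) := by
  set f : ℝ → ℝ := fun y => (-(1 / (2 * b))) * (y ^ (n + 1) * Real.exp (-b * y ^ 2)) with hf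
  have hderiv : ∀ y ∈ Ioi (0:ℝ), HasDerivAt f
      (y ^ (n + 2) * Real.exp (-b * y ^ 2)
        - ((n : ℝ) + 1) / (2 * b) * (y ^ n * Real.exp (-b * y ^ 2))) y := by
    intro y _
    have h1 : HasDerivAt (fun y : ℝ => y ^ (n + 1)) (((n : ℝ) + 1) * y ^ n) y := by
      simpa using hasDerivAt_pow (n + 1) y
    have hq : HasDerivAt (fun y : ℝ => -b * y ^ 2) (-b * (2 * y)) y := by
      simpa using (hasDerivAt_pow 2 y).const_mul (-b)
    have h2 : HasDerivAt (fun y : ℝ => Real.exp (-b * y ^ 2))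
        (Real.exp (-b * y ^ 2) * (-b * (2 * y))) y := (Real.hasDerivAt_exp _).comp y hq
    have h3 := (h1.mul h2).const_mul (-(1 / (2 * b)))
    convert h3 using 1
    · rfl
    · rfl
    · rfl
    field_simp
    ring
  have hint : IntegrableOn (fun y : ℝ =>
      y ^ (n + 2) * Real.exp (-b * y ^ 2)
        - ((n : ℝ) + 1) / (2 * b) * (y ^ n * Real.exp (-b * y ^ 2))) (Ioi 0) :=
    (integrableOn_pow_mul_gauss hb (n + 2)).sub
      ((integrableOn_pow_mul_gauss hb n).const_mul _)
  have htend : Tendsto f atTop (nhds 0) := by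
    have := (tendsto_pow_mul_gauss hb (n + 1)).const_mul (-(1 / (2 * b)))
    simpa [hf, mul_comm] using this
  have hcont : ContinuousWithinAt f (Ici 0) 0 := by
    apply Continuous.continuousWithinAt
    fun_prop
  have key := integral_Ioi_of_hasDerivAt_of_tendsto hcont hderiv hint htend
  have hf0 : f 0 = 0 := by simp [hf]
  rw [hf0, sub_zero] at key
  rw [integral_sub (integrableOn_pow_mul_gauss hb (n + 2))
    ((integrableOn_pow_mul_gauss hb n).const_mul _), integral_const_mul] at key
  linarith

lemma integrable_gauss_euclidean (D : ℕ) {b : ℝ} (hb : 0 < b) :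
    Integrable (fun v : EuclideanSpace ℝ (Fin D) => Real.exp (-b * ‖v‖ ^ 2)) := by
  have h := (GaussianFourier.integrable_cexp_neg_mul_sq_norm_add
    (V := EuclideanSpace ℝ (Fin D)) (b := (b : ℂ)) (by simpa using hb) 0 0).norm
  refine h.congr ?_
  refine .of_forall fun v => ?_
  simp [Complex.norm_exp, ← Complex.ofReal_pow]

lemma integrable_sq_mul_gauss_euclidean (D : ℕ) {b : ℝ} (hb : 0 < b) :
    Integrable (fun v : EuclideanSpace ℝ (Fin D) => ‖v‖ ^ 2 * Real.exp (-b * ‖v‖ ^ 2)) := by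
  have hb2 : 0 < b / 2 := by positivity
  refine Integrable.mono' ((integrable_gauss_euclidean D hb2).const_mul (2 / b))
    ?_ (.of_forall fun v => ?_)
  · exact ((continuous_norm.pow 2).mul
      (Real.continuous_exp.comp (continuous_const.mul (continuous_norm.pow 2)))).aestronglyMeasurable
  · have h1 : ‖v‖ ^ 2 ≤ (2 / b) * Real.exp (b / 2 * ‖v‖ ^ 2) := by
      have := Real.add_one_le_exp (b / 2 * ‖v‖ ^ 2)
      have h2 : b / 2 * ‖v‖ ^ 2 ≤ Real.exp (b / 2 * ‖v‖ ^ 2) := by linarith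
      calc ‖v‖ ^ 2 = (2 / b) * (b / 2 * ‖v‖ ^ 2) := by field_simp
        _ ≤ (2 / b) * Real.exp (b / 2 * ‖v‖ ^ 2) := by
            exact mul_le_mul_of_nonneg_left h2 (by positivity)
    have h3 : ‖v‖ ^ 2 * Real.exp (-b * ‖v‖ ^ 2)
        ≤ (2 / b) * Real.exp (b / 2 * ‖v‖ ^ 2) * Real.exp (-b * ‖v‖ ^ 2) :=
      mul_le_mul_of_nonneg_right h1 (Real.exp_pos _).le
    have h4 : Real.exp (b / 2 * ‖v‖ ^ 2) * Real.exp (-b * ‖v‖ ^ 2)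
        = Real.exp (-(b / 2) * ‖v‖ ^ 2) := by
      rw [← Real.exp_add]; congr 1; ring
    rw [Real.norm_eq_abs, abs_of_nonneg (by positivity)]
    calc ‖v‖ ^ 2 * Real.exp (-b * ‖v‖ ^ 2)
        ≤ (2 / b) * Real.exp (b / 2 * ‖v‖ ^ 2) * Real.exp (-b * ‖v‖ ^ 2) := h3
      _ = 2 / b * Real.exp (-(b / 2) * ‖v‖ ^ 2) := by rw [mul_assoc, h4]

lemma moment2_gauss_euclidean (D : ℕ) (hD : 1 ≤ D) {b : ℝ} (hb : 0 < b) :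
    ∫ v : EuclideanSpace ℝ (Fin D), ‖v‖ ^ 2 * Real.exp (-b * ‖v‖ ^ 2)
      = ((D : ℝ) / (2 * b)) * ∫ v : EuclideanSpace ℝ (Fin D), Real.exp (-b * ‖v‖ ^ 2) := by
  haveI : Nonempty (Fin D) := ⟨⟨0, hD⟩⟩
  haveI : Nontrivial (EuclideanSpace ℝ (Fin D)) :=
    ⟨⟨EuclideanSpace.single ⟨0, hD⟩ 1, 0, by
      intro h
      have := congrArg (fun w => w ⟨0, hD⟩) h
      simp [EuclideanSpace.single] at this⟩⟩
  have hdim : Module.finrank ℝ (EuclideanSpace ℝ (Fin D)) = D := finrank_euclideanSpace_fin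
  have h1 := integral_fun_norm_addHaar (volume : Measure (EuclideanSpace ℝ (Fin D)))
    (fun y : ℝ => y ^ 2 * Real.exp (-b * y ^ 2))
  have h2 := integral_fun_norm_addHaar (volume : Measure (EuclideanSpace ℝ (Fin D)))
    (fun y : ℝ => Real.exp (-b * y ^ 2))
  rw [hdim] at h1 h2
  have hinner1 : (∫ y in Ioi (0:ℝ), y ^ (D - 1) • (y ^ 2 * Real.exp (-b * y ^ 2)))
      = ∫ y in Ioi (0:ℝ), y ^ (D - 1 + 2) * Real.exp (-b * y ^ 2) := by
    congr 1 with y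
    rw [smul_eq_mul, ← mul_assoc, ← pow_add]
  have hcast : ((D - 1 : ℕ) : ℝ) + 1 = (D : ℝ) := by
    have : (D - 1) + 1 = D := by omega
    exact_mod_cast congrArg (Nat.cast : ℕ → ℝ) this
  have hparts := gauss_parts hb (D - 1)
  rw [hcast] at hparts
  rw [h1, h2, hinner1, hparts]
  simp only [smul_eq_mul, nsmul_eq_mul]
  ring

end Aux

lemma entropy_pointwise {x y : ℝ} (hx : 0 ≤ x) (hy : 0 < y) :
    0 ≤ x * Real.log x - x * Real.log y - x + y ∧
    (x * Real.log x - x * Real.log y - x + y = 0 ↔ x = y) := by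
  rcases eq_or_lt_of_le hx with h0 | hxpos
  · constructor
    · rw [← h0]; simp; linarith
    · rw [← h0]; simp
      exact eq_comm
  · have hdiv : 0 < y / x := div_pos hy hxpos
    have hlog := Real.log_le_sub_one_of_pos hdiv
    rw [Real.log_div hy.ne' hxpos.ne'] at hlog
    have h2 : x * (Real.log y - Real.log x) ≤ x * (y / x - 1) :=
      mul_le_mul_of_nonneg_left hlog hxpos.le
    have h3 : x * (y / x - 1) = y - x := by field_simp
    rw [mul_sub] at h2
    refine ⟨by linarith, ?_⟩
    constructor
    · intro heq
      by_contra hne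
      have hne' : y / x ≠ 1 := by
        intro h
        apply hne
        field_simp at h
        linarith
      have hstrict := Real.log_lt_sub_one_of_pos hdiv hne'
      rw [Real.log_div hy.ne' hxpos.ne'] at hstrict
      have h4 : x * (Real.log y - Real.log x) < x * (y / x - 1) :=
        mul_lt_mul_of_pos_left hstrict hxpos
      rw [mul_sub] at h4
      linarith
    · intro h
      rw [h]
      ring

/-- The Maxwellian distribution with density `ρ`, bulk velocity `u` and temperature `T`. -/
noncomputable def maxwellian (D : ℕ) (ρ T : ℝ) (u : EuclideanSpace ℝ (Fin D)) :
    EuclideanSpace ℝ (Fin D) → ℝ :=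
  fun v => ρ / (2 * π * T) ^ ((D : ℝ) / 2) * Real.exp (-‖v - u‖ ^ 2 / (2 * T))

/-- Among all nonnegative integrable functions `g` with prescribed moments
`(ρ, u, T)`, the Maxwellian `M^{ρ,u,T}` uniquely (up to a.e. equality) minimizes the
Boltzmann entropy `H(g) = ∫ g log g dv`. -/
theorem maxwellian_minimizes_entropy (D : ℕ) (hD : 1 ≤ D) (ρ T : ℝ) (hρ : 0 < ρ)
    (hT : 0 < T) (u : EuclideanSpace ℝ (Fin D)) (g : EuclideanSpace ℝ (Fin D) → ℝ)
    (hg_int : Integrable g) (hg_nonneg : ∀ v, 0 ≤ g v)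
    (hg_mass : ∫ v, g v = ρ)
    (hg_mom : ∫ v, g v • v = ρ • u)
    (hg_energy : ∫ v, ‖v - u‖ ^ 2 * g v = D * ρ * T)
    (hg_ent : Integrable (fun v => g v * Real.log (g v))) :
    (∫ v, maxwellian D ρ T u v * Real.log (maxwellian D ρ T u v))
        ≤ ∫ v, g v * Real.log (g v) ∧
    ((∫ v, g v * Real.log (g v))
        = (∫ v, maxwellian D ρ T u v * Real.log (maxwellian D ρ T u v))
      ↔ g =ᵐ[volume] maxwellian D ρ T u) := by
  set M := maxwellian D ρ T u with hMdef
  have hDpos : (0:ℝ) < D := by exact_mod_cast hD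
  set b : ℝ := (2 * T)⁻¹ with hbdef
  have hb : 0 < b := by rw [hbdef]; positivity
  set c : ℝ := ρ / (2 * π * T) ^ ((D : ℝ) / 2) with hcdef
  have hπ : (0:ℝ) < π := Real.pi_pos
  have hKpos : (0:ℝ) < (2 * π * T) ^ ((D : ℝ) / 2) := Real.rpow_pos_of_pos (by positivity) _
  have hc : 0 < c := div_pos hρ hKpos
  have hM_eq : ∀ v, M v = c * Real.exp (-b * ‖v - u‖ ^ 2) := by
    intro v
    simp only [hMdef, maxwellian, hcdef]
    congr 2
    rw [hbdef]
    ring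
  have hMpos : ∀ v, 0 < M v := fun v => by rw [hM_eq]; positivity
  have hlogM : ∀ v, Real.log (M v) = Real.log c - b * ‖v - u‖ ^ 2 := fun v => by
    rw [hM_eq v, Real.log_mul hc.ne' (Real.exp_ne_zero _), Real.log_exp]; ring
  have hI0 := integrable_gauss_euclidean D hb
  have hI2 := integrable_sq_mul_gauss_euclidean D hb
  have hMint : Integrable M := by
    refine ((hI0.comp_sub_right u).const_mul c).congr (.of_forall fun v => ?_)
    exact (hM_eq v).symm
  have hM2int : Integrable (fun v => ‖v - u‖ ^ 2 * M v) := by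
    refine ((hI2.comp_sub_right u).const_mul c).congr (.of_forall fun v => ?_)
    show c * (‖v - u‖ ^ 2 * Real.exp (-b * ‖v - u‖ ^ 2)) = ‖v - u‖ ^ 2 * M v
    rw [hM_eq]; ring
  have hshift0 : (∫ v : EuclideanSpace ℝ (Fin D), Real.exp (-b * ‖v - u‖ ^ 2))
      = ∫ v : EuclideanSpace ℝ (Fin D), Real.exp (-b * ‖v‖ ^ 2) := by
    exact integral_sub_right_eq_self
      (fun v : EuclideanSpace ℝ (Fin D) => Real.exp (-b * ‖v‖ ^ 2)) u
  have hshift2 : (∫ v : EuclideanSpace ℝ (Fin D), ‖v - u‖ ^ 2 * Real.exp (-b * ‖v - u‖ ^ 2))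
      = ∫ v : EuclideanSpace ℝ (Fin D), ‖v‖ ^ 2 * Real.exp (-b * ‖v‖ ^ 2) := by
    exact integral_sub_right_eq_self
      (fun v : EuclideanSpace ℝ (Fin D) => ‖v‖ ^ 2 * Real.exp (-b * ‖v‖ ^ 2)) u
  have hgauss : (∫ v : EuclideanSpace ℝ (Fin D), Real.exp (-b * ‖v‖ ^ 2))
      = (π / b) ^ ((D : ℝ) / 2) := by
    rw [GaussianFourier.integral_rexp_neg_mul_sq_norm hb, finrank_euclideanSpace_fin]
  have hcρ : c * (π / b) ^ ((D : ℝ) / 2) = ρ := by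
    have hπb : π / b = 2 * π * T := by rw [hbdef]; field_simp
    rw [hπb, hcdef]
    exact div_mul_cancel₀ ρ hKpos.ne'
  have hM_mass : ∫ v, M v = ρ := by
    calc ∫ v, M v = ∫ v, c * Real.exp (-b * ‖v - u‖ ^ 2) :=
          integral_congr_ae (.of_forall hM_eq)
      _ = c * (π / b) ^ ((D : ℝ) / 2) := by rw [integral_const_mul, hshift0, hgauss]
      _ = ρ := hcρ
  have hM_energy : ∫ v, ‖v - u‖ ^ 2 * M v = D * ρ * T := by
    calc ∫ v, ‖v - u‖ ^ 2 * M v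
        = ∫ v, c * (‖v - u‖ ^ 2 * Real.exp (-b * ‖v - u‖ ^ 2)) :=
          integral_congr_ae (.of_forall fun v => by
            show ‖v - u‖ ^ 2 * M v = c * (‖v - u‖ ^ 2 * Real.exp (-b * ‖v - u‖ ^ 2))
            rw [hM_eq]; ring)
      _ = c * (((D : ℝ) / (2 * b)) * (π / b) ^ ((D : ℝ) / 2)) := by
          rw [integral_const_mul, hshift2, moment2_gauss_euclidean D hD hb, hgauss]
      _ = ((D : ℝ) / (2 * b)) * (c * (π / b) ^ ((D : ℝ) / 2)) := by ring
      _ = ((D : ℝ) / (2 * b)) * ρ := by rw [hcρ]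
      _ = D * ρ * T := by rw [hbdef]; field_simp
  have hg2int : Integrable (fun v => ‖v - u‖ ^ 2 * g v) := by
    by_contra h
    have hpos : (0:ℝ) < D * ρ * T := mul_pos (mul_pos hDpos hρ) hT
    rw [integral_undef h] at hg_energy
    linarith
  have hglogM_eq : ∀ v, g v * Real.log (M v) = Real.log c * g v - b * (‖v - u‖ ^ 2 * g v) :=
    fun v => by rw [hlogM]; ring
  have hglogM_int : Integrable (fun v => g v * Real.log (M v)) :=
    ((hg_int.const_mul (Real.log c)).sub (hg2int.const_mul b)).congr
      (.of_forall fun v => (hglogM_eq v).symm)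
  have hglogM : ∫ v, g v * Real.log (M v) = Real.log c * ρ - b * (D * ρ * T) := by
    rw [integral_congr_ae (.of_forall hglogM_eq),
      integral_sub (hg_int.const_mul _) (hg2int.const_mul _), integral_const_mul,
      integral_const_mul, hg_mass, hg_energy]
  have hMlogM_eq : ∀ v, M v * Real.log (M v) = Real.log c * M v - b * (‖v - u‖ ^ 2 * M v) :=
    fun v => by rw [hlogM]; ring
  have hMlogM : ∫ v, M v * Real.log (M v) = Real.log c * ρ - b * (D * ρ * T) := by
    rw [integral_congr_ae (.of_forall hMlogM_eq),
      integral_sub (hMint.const_mul _) (hM2int.const_mul _), integral_const_mul,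
      integral_const_mul, hM_mass, hM_energy]
  set F : EuclideanSpace ℝ (Fin D) → ℝ :=
    fun v => g v * Real.log (g v) - g v * Real.log (M v) - g v + M v with hFdef
  have hFnonneg : ∀ v, 0 ≤ F v := fun v => (entropy_pointwise (hg_nonneg v) (hMpos v)).1
  have hFint : Integrable F := ((hg_ent.sub hglogM_int).sub hg_int).add hMint
  have hFval : ∫ v, F v
      = (∫ v, g v * Real.log (g v)) - ∫ v, M v * Real.log (M v) := by
    have e1 : ∫ v, F v
        = (∫ v, (g v * Real.log (g v) - g v * Real.log (M v) - g v)) + ∫ v, M v :=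
      integral_add
        (show Integrable (fun v => g v * Real.log (g v) - g v * Real.log (M v) - g v) from
          (hg_ent.sub hglogM_int).sub hg_int) hMint
    have e2 : (∫ v, (g v * Real.log (g v) - g v * Real.log (M v) - g v))
        = (∫ v, (g v * Real.log (g v) - g v * Real.log (M v))) - ∫ v, g v :=
      integral_sub (hg_ent.sub hglogM_int) hg_int
    have e3 : (∫ v, (g v * Real.log (g v) - g v * Real.log (M v)))
        = (∫ v, g v * Real.log (g v)) - ∫ v, g v * Real.log (M v) :=
      integral_sub hg_ent hglogM_int
    rw [e1, e2, e3, hglogM, hg_mass, hM_mass, hMlogM]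
    ring
  constructor
  · have h0 := integral_nonneg (μ := volume) (show 0 ≤ F from hFnonneg)
    rw [hFval] at h0
    linarith
  · constructor
    · intro heq
      have hzero : ∫ v, F v = 0 := by rw [hFval, heq]; ring
      have hae := (integral_eq_zero_iff_of_nonneg hFnonneg hFint).mp hzero
      filter_upwards [hae] with v hv
      exact (entropy_pointwise (hg_nonneg v) (hMpos v)).2.mp (by simpa using hv)
    · intro hae
      refine integral_congr_ae ?_
      filter_upwards [hae] with v hv
      rw [hv]
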